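/- Suppose f is twice continuously differentiable, X ∈ S_{n,p} satisfies ∇h(X) = 0, and the Hessian of g at X has operator norm at most M₂. Then: (a) for every D₂ ∈ N_X, ⟨D₂, Hh(X)[D₂]⟩ ≥ (2β − M₂)·‖D₂‖_F²; and (b) for every D₁ ∈ T_X and every D₂ ∈ N_X, ⟨D₁, Hh(X)[D₂]⟩ = 0. -/

import Mathlib

open Matrix

attribute [local instance] Matrix.frobeniusNormedAddCommGroup Matrix.frobeniusNormedSpace

namespace ExPen

noncomputable def finner {n p : ℕ} (A B : Matrix (Fin n) (Fin p) ℝ) : ℝ := (Aᵀ * B).trace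

noncomputable def Phi {p : ℕ} (M : Matrix (Fin p) (Fin p) ℝ) : Matrix (Fin p) (Fin p) ℝ :=
  (1 / 2 : ℝ) • (M + Mᵀ)

noncomputable def Amap {n p : ℕ} (X : Matrix (Fin n) (Fin p) ℝ) : Matrix (Fin p) (Fin p) ℝ :=
  (3 / 2 : ℝ) • (1 : Matrix (Fin p) (Fin p) ℝ) - (1 / 2 : ℝ) • (Xᵀ * X)

noncomputable def g {n p : ℕ} (f : Matrix (Fin n) (Fin p) ℝ → ℝ)
    (X : Matrix (Fin n) (Fin p) ℝ) : ℝ := f (X * Amap X)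

noncomputable def hpen {n p : ℕ} (f : Matrix (Fin n) (Fin p) ℝ → ℝ) (β : ℝ)
    (X : Matrix (Fin n) (Fin p) ℝ) : ℝ := g f X + β / 4 * ‖Xᵀ * X - 1‖ ^ 2

noncomputable def dualCLM {n p : ℕ} (G : Matrix (Fin n) (Fin p) ℝ) :
    Matrix (Fin n) (Fin p) ℝ →L[ℝ] ℝ :=
  LinearMap.toContinuousLinearMap
    { toFun := fun D => (Gᵀ * D).trace
      map_add' := by intro D E; simp [Matrix.mul_add]
      map_smul' := by intro c D; simp [Matrix.mul_smul] }

def HasGradAt {n p : ℕ} (φ : Matrix (Fin n) (Fin p) ℝ → ℝ)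
    (X G : Matrix (Fin n) (Fin p) ℝ) : Prop :=
  HasFDerivAt φ (dualCLM G) X

noncomputable def specNorm {n p : ℕ} (X : Matrix (Fin n) (Fin p) ℝ) : ℝ :=
  ‖LinearMap.toContinuousLinearMap
    (Matrix.toEuclideanLin X : EuclideanSpace ℝ (Fin p) →ₗ[ℝ] EuclideanSpace ℝ (Fin n))‖

lemma posSemidef_tmul {n p : ℕ} (X : Matrix (Fin n) (Fin p) ℝ) : (Xᵀ * X).PosSemidef := by
  simpa [Matrix.conjTranspose_eq_transpose_of_trivial] using
    Matrix.posSemidef_conjTranspose_mul_self X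

noncomputable def Pst {n p : ℕ} (X : Matrix (Fin n) (Fin p) ℝ) : Matrix (Fin n) (Fin p) ℝ :=
  X * ((posSemidef_tmul X).1.eigenvectorUnitary.1 * diagonal ((↑) ∘ Real.sqrt ∘ (posSemidef_tmul X).1.eigenvalues) * (star (posSemidef_tmul X).1.eigenvectorUnitary : Matrix (Fin p) (Fin p) ℝ))⁻¹


-- AUX (to be inserted before statement_9); assumes defs finner dualCLM HasGradAt Amap g hpen exist
section Aux

@[simp] lemma dualCLM_apply {n p : ℕ} (G D : Matrix (Fin n) (Fin p) ℝ) :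
    dualCLM G D = (Gᵀ * D).trace := rfl

lemma dualCLM_add {n p : ℕ} (G₁ G₂ : Matrix (Fin n) (Fin p) ℝ) :
    dualCLM (G₁ + G₂) = dualCLM G₁ + dualCLM G₂ := by
  ext D
  simp [Matrix.transpose_add, Matrix.add_mul]

lemma finner_eq_sum {n p : ℕ} (A B : Matrix (Fin n) (Fin p) ℝ) :
    finner A B = ∑ ij : Fin n × Fin p, A ij.1 ij.2 * B ij.1 ij.2 := by
  rw [finner, Matrix.trace, ← Finset.univ_product_univ, Finset.sum_product]
  simp only [Matrix.diag_apply, Matrix.mul_apply, Matrix.transpose_apply]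
  exact Finset.sum_comm

lemma norm_sq_eq_finner {n p : ℕ} (A : Matrix (Fin n) (Fin p) ℝ) :
    ‖A‖ ^ 2 = finner A A := by
  rw [finner_eq_sum, Matrix.frobenius_norm_def A]
  rw [← Real.rpow_natCast _ 2, ← Real.rpow_mul (by positivity)]
  norm_num
  rw [← Finset.univ_product_univ, Finset.sum_product]
  simp [Real.rpow_two, sq_abs, sq]

lemma abs_finner_le {n p : ℕ} (A B : Matrix (Fin n) (Fin p) ℝ) :
    |finner A B| ≤ ‖A‖ * ‖B‖ := by
  have h := Finset.sum_mul_sq_le_sq_mul_sq Finset.univ (fun ij : Fin n × Fin p => A ij.1 ij.2)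
    (fun ij => B ij.1 ij.2)
  have h1 : finner A B ^ 2 ≤ (‖A‖ * ‖B‖) ^ 2 := by
    rw [finner_eq_sum, mul_pow, norm_sq_eq_finner, norm_sq_eq_finner, finner_eq_sum, finner_eq_sum]
    simpa [sq] using h
  have hnn : (0:ℝ) ≤ ‖A‖ * ‖B‖ := by positivity
  have h2 := Real.sqrt_le_sqrt h1
  rwa [Real.sqrt_sq_eq_abs, Real.sqrt_sq hnn] at h2

lemma grad_unique {n p : ℕ} {φ : Matrix (Fin n) (Fin p) ℝ → ℝ}
    {X G₁ G₂ : Matrix (Fin n) (Fin p) ℝ}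
    (h₁ : HasGradAt φ X G₁) (h₂ : HasGradAt φ X G₂) : G₁ = G₂ := by
  have h : dualCLM G₁ = dualCLM G₂ := h₁.unique h₂
  have e1 : dualCLM G₁ (G₁ - G₂) = dualCLM G₂ (G₁ - G₂) := by rw [h]
  simp only [dualCLM_apply] at e1
  have h3 : finner (G₁ - G₂) (G₁ - G₂) = 0 := by
    unfold finner
    rw [Matrix.transpose_sub, Matrix.sub_mul, Matrix.trace_sub, e1, sub_self]
  have h4 : ‖G₁ - G₂‖ ^ 2 = 0 := by rw [norm_sq_eq_finner]; exact h3
  have h5 : G₁ - G₂ = 0 :=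
    norm_eq_zero.mp (pow_eq_zero_iff (n := 2) (by norm_num) |>.mp h4)
  exact sub_eq_zero.mp h5

section infra
variable {a b c : Type*} [Fintype a] [Fintype b] [Fintype c]

noncomputable def mulCLM : Matrix a b ℝ →L[ℝ] Matrix b c ℝ →L[ℝ] Matrix a c ℝ :=
  LinearMap.toContinuousLinearMap
  { toFun := fun A => LinearMap.toContinuousLinearMap
      { toFun := fun B => A * B
        map_add' := fun B C => Matrix.mul_add A B C
        map_smul' := fun r B => (Matrix.mul_smul A r B) }
    map_add' := by intro A B; ext C i j; simp [Matrix.add_mul]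
    map_smul' := by intro r A; ext C i j; simp [Matrix.smul_mul] }

@[simp] lemma mulCLM_apply (A : Matrix a b ℝ) (B : Matrix b c ℝ) :
    (mulCLM A) B = A * B := rfl

noncomputable def mulCLMr (B : Matrix b c ℝ) : Matrix a b ℝ →L[ℝ] Matrix a c ℝ :=
  LinearMap.toContinuousLinearMap
    { toFun := fun A => A * B
      map_add' := fun A C => Matrix.add_mul A C B
      map_smul' := fun r A => Matrix.smul_mul r A B }

@[simp] lemma mulCLMr_apply (B : Matrix b c ℝ) (A : Matrix a b ℝ) :
    (mulCLMr B) A = A * B := rfl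

noncomputable def transCLM : Matrix a b ℝ →L[ℝ] Matrix b a ℝ :=
  LinearMap.toContinuousLinearMap
  { toFun := fun A => Aᵀ
    map_add' := fun A B => Matrix.transpose_add A B
    map_smul' := fun r A => Matrix.transpose_smul r A }

@[simp] lemma transCLM_apply (A : Matrix a b ℝ) : transCLM A = Aᵀ := rfl

noncomputable def traceCLM : Matrix a a ℝ →L[ℝ] ℝ :=
  LinearMap.toContinuousLinearMap (Matrix.traceLinearMap a ℝ ℝ)

@[simp] lemma traceCLM_apply (A : Matrix a a ℝ) : traceCLM A = A.trace := rfl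

theorem hasFDerivAt_matmul {E' : Type*} [NormedAddCommGroup E'] [NormedSpace ℝ E']
    {u : E' → Matrix a b ℝ} {v : E' → Matrix b c ℝ}
    {u' : E' →L[ℝ] Matrix a b ℝ} {v' : E' →L[ℝ] Matrix b c ℝ} {x : E'}
    (hu : HasFDerivAt u u' x) (hv : HasFDerivAt v v' x) :
    HasFDerivAt (fun y => u y * v y)
      ((mulCLMr (v x)).comp u' + ((mulCLM (u x)).comp v')) x := by
  have h := (mulCLM.isBoundedBilinearMap
      (𝕜 := ℝ) (E := Matrix a b ℝ) (F := Matrix b c ℝ) (G := Matrix a c ℝ)).hasFDerivAt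
      (u x, v x)
  have h2 := h.comp x (hu.prodMk hv)
  refine h2.congr_fderiv ?_
  refine ContinuousLinearMap.ext fun D => ?_
  show u x * v' D + u' D * v x = u' D * v x + u x * v' D
  exact add_comm _ _

lemma trt (A : Matrix a a ℝ) : Aᵀ.trace = A.trace := by simp

end infra

noncomputable def qd {n p : ℕ} (Y : Matrix (Fin n) (Fin p) ℝ) :
    Matrix (Fin n) (Fin p) ℝ →L[ℝ] Matrix (Fin p) (Fin p) ℝ :=
  (mulCLMr Y).comp transCLM +
    (mulCLM Yᵀ : Matrix (Fin n) (Fin p) ℝ →L[ℝ] Matrix (Fin p) (Fin p) ℝ).comp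
      (ContinuousLinearMap.id ℝ _)

@[simp] lemma qd_apply {n p : ℕ} (Y D : Matrix (Fin n) (Fin p) ℝ) :
    qd Y D = Dᵀ * Y + Yᵀ * D := by simp [qd]

lemma hasFDerivAt_q {n p : ℕ} (Y : Matrix (Fin n) (Fin p) ℝ) :
    HasFDerivAt (fun Z : Matrix (Fin n) (Fin p) ℝ => Zᵀ * Z) (qd Y) Y := by
  have hT : HasFDerivAt (fun Z : Matrix (Fin n) (Fin p) ℝ => Zᵀ) transCLM Y := by
    have h0 := transCLM.hasFDerivAt (x := Y)
    exact h0
  exact hasFDerivAt_matmul hT (hasFDerivAt_id Y)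

lemma hasGradAt_pen {n p : ℕ} (β : ℝ) (Y : Matrix (Fin n) (Fin p) ℝ) :
    HasGradAt (fun Z : Matrix (Fin n) (Fin p) ℝ => β / 4 * ‖Zᵀ * Z - 1‖ ^ 2) Y
      (β • (Y * (Yᵀ * Y - 1))) := by
  have hm : HasFDerivAt (fun Z : Matrix (Fin n) (Fin p) ℝ => Zᵀ * Z - 1) (qd Y) Y :=
    (hasFDerivAt_q Y).sub_const 1
  have hmt : HasFDerivAt (fun Z : Matrix (Fin n) (Fin p) ℝ => (Zᵀ * Z - 1)ᵀ)
      (transCLM.comp (qd Y)) Y := by exact (transCLM (a := Fin p) (b := Fin p)).hasFDerivAt.comp Y hm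
  have hprod := hasFDerivAt_matmul hmt hm
  have htr : HasFDerivAt
      (fun Z : Matrix (Fin n) (Fin p) ℝ => traceCLM ((Zᵀ * Z - 1)ᵀ * (Zᵀ * Z - 1)))
      (traceCLM.comp ((mulCLMr ((Yᵀ * Y - 1))).comp (transCLM.comp (qd Y)) +
        (mulCLM ((Yᵀ * Y - 1)ᵀ)).comp (qd Y))) Y := by
    exact traceCLM.hasFDerivAt.comp Y hprod
  have hfin := htr.const_mul (β / 4)
  have hfe : (fun Z : Matrix (Fin n) (Fin p) ℝ => β / 4 * ‖Zᵀ * Z - 1‖ ^ 2)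
      = fun Z => β / 4 * traceCLM ((Zᵀ * Z - 1)ᵀ * (Zᵀ * Z - 1)) := by
    funext Z
    rw [norm_sq_eq_finner]
    rfl
  rw [HasGradAt, hfe]
  suffices e : dualCLM (β • (Y * (Yᵀ * Y - 1))) = (β / 4) • traceCLM.comp
      ((mulCLMr ((Yᵀ * Y - 1))).comp (transCLM.comp (qd Y)) + (mulCLM ((Yᵀ * Y - 1)ᵀ)).comp (qd Y)) by
    rw [e]; exact hfin
  set M := Yᵀ * Y - 1 with hMdef
  have hMT : Mᵀ = M := by
    rw [hMdef, Matrix.transpose_sub, Matrix.transpose_mul, Matrix.transpose_transpose,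
      Matrix.transpose_one]
  ext D
  simp only [ContinuousLinearMap.smul_apply, ContinuousLinearMap.comp_apply,
    ContinuousLinearMap.add_apply, ContinuousLinearMap.flip_apply, mulCLM_apply, mulCLMr_apply,
    transCLM_apply, traceCLM_apply, qd_apply, dualCLM_apply,
    ContinuousLinearMap.coe_id', id_eq, smul_eq_mul]
  have e0 : (Yᵀ * D)ᵀ = Dᵀ * Y := by
    rw [Matrix.transpose_mul, Matrix.transpose_transpose]
  have e1 : (Dᵀ * Y)ᵀ = Yᵀ * D := by
    rw [Matrix.transpose_mul, Matrix.transpose_transpose]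
  have t1 : (Yᵀ * D * M).trace = (M * (Yᵀ * D)).trace := Matrix.trace_mul_comm (Yᵀ * D) M
  have t2 : (Dᵀ * Y * M).trace = (M * (Yᵀ * D)).trace := by
    calc (Dᵀ * Y * M).trace = ((Dᵀ * Y * M)ᵀ).trace := (trt _).symm
      _ = (Mᵀ * (Yᵀ * D)).trace := by rw [Matrix.transpose_mul, e1]
      _ = (M * (Yᵀ * D)).trace := by rw [hMT]
  rw [Matrix.transpose_smul, Matrix.smul_mul, Matrix.trace_smul, smul_eq_mul,
    Matrix.transpose_mul, hMT, Matrix.mul_assoc,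
    Matrix.transpose_add, e0, e1, Matrix.add_mul, Matrix.mul_add,
    Matrix.trace_add, Matrix.trace_add, Matrix.trace_add, t1, t2,
    Matrix.trace_mul_comm M (Dᵀ * Y), Matrix.trace_mul_comm M (Yᵀ * D), t1, t2]
  ring

lemma Amap_one {n p : ℕ} {X : Matrix (Fin n) (Fin p) ℝ} (hX : Xᵀ * X = 1) :
    Amap X = 1 := by
  rw [Amap, hX, ← sub_smul]
  norm_num

noncomputable def Jd {n p : ℕ} (Y : Matrix (Fin n) (Fin p) ℝ) :
    Matrix (Fin n) (Fin p) ℝ →L[ℝ] Matrix (Fin n) (Fin p) ℝ :=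
  (3/2 : ℝ) • ContinuousLinearMap.id ℝ _ -
    (1/2 : ℝ) • ((mulCLMr (Yᵀ * Y)).comp (ContinuousLinearMap.id ℝ _) +
      (mulCLM Y : Matrix (Fin p) (Fin p) ℝ →L[ℝ] Matrix (Fin n) (Fin p) ℝ).comp (qd Y))

@[simp] lemma Jd_apply {n p : ℕ} (Y D : Matrix (Fin n) (Fin p) ℝ) :
    Jd Y D = (3/2 : ℝ) • D - (1/2 : ℝ) • (D * (Yᵀ * Y) + Y * (Dᵀ * Y + Yᵀ * D)) := by
  simp [Jd]

lemma hasFDerivAt_J {n p : ℕ} (Y : Matrix (Fin n) (Fin p) ℝ) :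
    HasFDerivAt (fun Z : Matrix (Fin n) (Fin p) ℝ => Z * Amap Z) (Jd Y) Y := by
  have he : (fun Z : Matrix (Fin n) (Fin p) ℝ => Z * Amap Z)
      = fun Z => (3/2 : ℝ) • Z - (1/2 : ℝ) • (Z * (Zᵀ * Z)) := by
    funext Z
    rw [Amap, Matrix.mul_sub, Matrix.mul_smul, Matrix.mul_one, Matrix.mul_smul]
  rw [he]
  have h1 := hasFDerivAt_matmul (hasFDerivAt_id Y) (hasFDerivAt_q Y)
  exact ((hasFDerivAt_id Y).const_smul (3/2 : ℝ)).sub (h1.const_smul (1/2 : ℝ))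

noncomputable def gradgF {n p : ℕ} (gradf : Matrix (Fin n) (Fin p) ℝ → Matrix (Fin n) (Fin p) ℝ)
    (Y : Matrix (Fin n) (Fin p) ℝ) : Matrix (Fin n) (Fin p) ℝ :=
  (3/2 : ℝ) • gradf (Y * Amap Y) -
    (1/2 : ℝ) • (gradf (Y * Amap Y) * (Yᵀ * Y) + Y * ((gradf (Y * Amap Y))ᵀ * Y) +
      (Y * Yᵀ) * gradf (Y * Amap Y))

lemma hasGradAt_gF {n p : ℕ} (f : Matrix (Fin n) (Fin p) ℝ → ℝ)
    (gradf : Matrix (Fin n) (Fin p) ℝ → Matrix (Fin n) (Fin p) ℝ)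
    (hgradf : ∀ Y, HasGradAt f Y (gradf Y)) (Y : Matrix (Fin n) (Fin p) ℝ) :
    HasGradAt (g f) Y (gradgF gradf Y) := by
  have h0 : HasFDerivAt f (dualCLM (gradf (Y * Amap Y))) (Y * Amap Y) := hgradf _
  have hc : HasFDerivAt (g f) ((dualCLM (gradf (Y * Amap Y))).comp (Jd Y)) Y := by
    exact h0.comp Y (hasFDerivAt_J Y)
  rw [HasGradAt]
  convert hc using 1
  ext D
  simp only [dualCLM_apply, ContinuousLinearMap.comp_apply, Jd_apply, gradgF]
  set G := gradf (Y * Amap Y) with hGdef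
  simp only [Matrix.transpose_sub, Matrix.transpose_smul, Matrix.transpose_add,
    Matrix.transpose_mul, Matrix.transpose_transpose, Matrix.sub_mul, Matrix.smul_mul,
    Matrix.add_mul, Matrix.mul_sub, Matrix.mul_smul, Matrix.mul_add, Matrix.trace_sub,
    Matrix.trace_smul, Matrix.trace_add]
  have ia : (Gᵀ * (D * (Yᵀ * Y))).trace = (Yᵀ * Y * Gᵀ * D).trace := by
    rw [Matrix.trace_mul_comm Gᵀ (D * (Yᵀ * Y)), Matrix.mul_assoc D,
      Matrix.trace_mul_comm D]
  have ib : (Gᵀ * (Y * (Dᵀ * Y))).trace = (Yᵀ * G * Yᵀ * D).trace := by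
    rw [← trt (Gᵀ * (Y * (Dᵀ * Y))), Matrix.transpose_mul, Matrix.transpose_mul,
      Matrix.transpose_mul, Matrix.transpose_transpose, Matrix.transpose_transpose,
      Matrix.mul_assoc (Yᵀ * D) Yᵀ G, Matrix.trace_mul_comm (Yᵀ * D) (Yᵀ * G),
      ← Matrix.mul_assoc (Yᵀ * G) Yᵀ D]
  have ic : (Gᵀ * (Y * Yᵀ) * D).trace = (Gᵀ * (Y * (Yᵀ * D))).trace := by
    rw [Matrix.mul_assoc, Matrix.mul_assoc]
  rw [ic, ia, ib]
  ring
end Aux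

lemma finner_X_sym {n p : ℕ} {D₁ X : Matrix (Fin n) (Fin p) ℝ}
    (hD : Phi (D₁ᵀ * X) = 0) {N : Matrix (Fin p) (Fin p) ℝ} (hN : Nᵀ = N) :
    finner D₁ (X * N) = 0 := by
  have h1 : (1/2 : ℝ) • (D₁ᵀ * X + (D₁ᵀ * X)ᵀ) = 0 := hD
  have h2 : D₁ᵀ * X + (D₁ᵀ * X)ᵀ = 0 := by
    have h3 := congrArg (fun M => (2:ℝ) • M) h1
    simpa [smul_smul] using h3
  have hsk : (D₁ᵀ * X)ᵀ = -(D₁ᵀ * X) := eq_neg_of_add_eq_zero_right h2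
  have key : finner D₁ (X * N) = -(finner D₁ (X * N)) := by
    calc finner D₁ (X * N) = ((D₁ᵀ * X) * N).trace := by rw [finner, ← Matrix.mul_assoc]
      _ = (((D₁ᵀ * X) * N)ᵀ).trace := (trt _).symm
      _ = (Nᵀ * (D₁ᵀ * X)ᵀ).trace := by rw [Matrix.transpose_mul]
      _ = (N * -(D₁ᵀ * X)).trace := by rw [hN, hsk]
      _ = -((N * (D₁ᵀ * X)).trace) := by rw [Matrix.mul_neg, Matrix.trace_neg]
      _ = -(((D₁ᵀ * X) * N).trace) := by rw [Matrix.trace_mul_comm]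
      _ = -(finner D₁ (X * N)) := by rw [finner, ← Matrix.mul_assoc]
  linarith

set_option maxHeartbeats 1000000 in
theorem statement_9 {n p : ℕ} (f : Matrix (Fin n) (Fin p) ℝ → ℝ) (β M₂ : ℝ)
    (gradf gradg gradh : Matrix (Fin n) (Fin p) ℝ → Matrix (Fin n) (Fin p) ℝ)
    (Hf : Matrix (Fin n) (Fin p) ℝ → Matrix (Fin n) (Fin p) ℝ →L[ℝ] Matrix (Fin n) (Fin p) ℝ)
    (hgradf : ∀ Y, HasGradAt f Y (gradf Y))
    (hHf : ∀ Y, HasFDerivAt gradf (Hf Y) Y)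
    (hHfCont : Continuous Hf)
    (hgradg : ∀ Y, HasGradAt (g f) Y (gradg Y))
    (hgradh : ∀ Y, HasGradAt (hpen f β) Y (gradh Y))
    (X : Matrix (Fin n) (Fin p) ℝ) (hX : Xᵀ * X = 1)
    (hstat : gradh X = 0)
    (Hg : Matrix (Fin n) (Fin p) ℝ →L[ℝ] Matrix (Fin n) (Fin p) ℝ)
    (hHg : HasFDerivAt gradg Hg X) (hM₂ : @Norm.norm _ (@ContinuousLinearMap.hasOpNorm ℝ ℝ (Matrix (Fin n) (Fin p) ℝ) (Matrix (Fin n) (Fin p) ℝ) _ _ _ _ _ _ (RingHom.id ℝ)) Hg ≤ M₂)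
    (Hh : Matrix (Fin n) (Fin p) ℝ →L[ℝ] Matrix (Fin n) (Fin p) ℝ)
    (hHh : HasFDerivAt gradh Hh X) :
    (∀ Λ : Matrix (Fin p) (Fin p) ℝ, Λᵀ = Λ →
      (2 * β - M₂) * ‖X * Λ‖ ^ 2 ≤ finner (X * Λ) (Hh (X * Λ))) ∧
    (∀ D₁ : Matrix (Fin n) (Fin p) ℝ, Phi (D₁ᵀ * X) = 0 →
      ∀ Λ : Matrix (Fin p) (Fin p) ℝ, Λᵀ = Λ →
        finner D₁ (Hh (X * Λ)) = 0) := by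
  have hXX : ∀ B : Matrix (Fin p) (Fin p) ℝ, Xᵀ * (X * B) = B := by
    intro B; rw [← Matrix.mul_assoc, hX, Matrix.one_mul]
  -- gradh = gradg + penalty gradient
  have hgh : ∀ Y, gradh Y = gradg Y + β • (Y * (Yᵀ * Y - 1)) := by
    intro Y
    refine (grad_unique (hgradh Y) ?_).symm |>.symm
    rw [HasGradAt, dualCLM_add]
    exact HasFDerivAt.add (hgradg Y) (hasGradAt_pen β Y)
  have hggF : gradg = gradgF gradf := by
    funext Y
    exact grad_unique (hgradg Y) (hasGradAt_gF f gradf hgradf Y)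
  have hq1 : Xᵀ * X - 1 = 0 := by rw [hX, sub_self]
  have hg0 : gradg X = 0 := by
    have h1 := hgh X
    rw [hstat, hq1, Matrix.mul_zero, smul_zero, add_zero] at h1
    exact h1.symm
  have hJX : X * Amap X = X := by rw [Amap_one hX, Matrix.mul_one]
  -- stationarity structure
  have hgF0 : (3/2 : ℝ) • gradf X -
      (1/2 : ℝ) • (gradf X + X * ((gradf X)ᵀ * X) + X * (Xᵀ * gradf X)) = 0 := by
    have h1 := hg0
    rw [hggF] at h1
    rw [gradgF, hJX, hX, Matrix.mul_one, Matrix.mul_assoc] at h1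
    exact h1
  have hsym : (gradf X)ᵀ * X = Xᵀ * gradf X := by
    have h1 := congrArg (fun M => Xᵀ * M) hgF0
    simp only [Matrix.mul_sub, Matrix.mul_smul, Matrix.mul_add, Matrix.mul_zero, hXX] at h1
    have h2 : (gradf X)ᵀ * X - Xᵀ * gradf X =
        -(2:ℝ) • ((3/2 : ℝ) • (Xᵀ * gradf X) -
          (1/2 : ℝ) • (Xᵀ * gradf X + (gradf X)ᵀ * X + Xᵀ * gradf X)) := by
      module
    rw [h1, smul_zero] at h2
    exact sub_eq_zero.mp h2
  have hGS : gradf X = X * (Xᵀ * gradf X) := by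
    rw [hsym] at hgF0
    have h2 : gradf X - X * (Xᵀ * gradf X) =
        (3/2 : ℝ) • gradf X -
          (1/2 : ℝ) • (gradf X + X * (Xᵀ * gradf X) + X * (Xᵀ * gradf X)) := by
      module
    rw [hgF0] at h2
    exact sub_eq_zero.mp h2
  set S : Matrix (Fin p) (Fin p) ℝ := Xᵀ * gradf X with hSdef
  have hS : Sᵀ = S := by
    rw [hSdef, Matrix.transpose_mul, Matrix.transpose_transpose, hsym]
  -- Hessian of h = Hg + penalty Hessian
  have hmul := hasFDerivAt_matmul (hasFDerivAt_id X) ((hasFDerivAt_q X).sub_const 1)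
  have hP := hmul.const_smul β
  have hgradh_sum : HasFDerivAt gradh
      (Hg + β • ((mulCLMr (Xᵀ * X - 1)).comp (ContinuousLinearMap.id ℝ _) +
        (mulCLM X : Matrix (Fin p) (Fin p) ℝ →L[ℝ] Matrix (Fin n) (Fin p) ℝ).comp (qd X))) X := by
    have he : gradh = fun Y => gradg Y + β • (Y * (Yᵀ * Y - 1)) := funext hgh
    rw [he]
    exact hHg.add hP
  have hHh_eq := hHh.unique hgradh_sum
  have hstep : ∀ Λ : Matrix (Fin p) (Fin p) ℝ, Λᵀ = Λ →
      Hh (X * Λ) = Hg (X * Λ) + (2 * β) • (X * Λ) := by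
    intro Λ hΛ
    rw [hHh_eq]
    simp only [ContinuousLinearMap.add_apply, ContinuousLinearMap.smul_apply,
      ContinuousLinearMap.comp_apply, ContinuousLinearMap.flip_apply,
      ContinuousLinearMap.coe_id', id_eq, mulCLM_apply, mulCLMr_apply, qd_apply, hq1, Matrix.mul_zero]
    congr 1
    have e1 : (X * Λ)ᵀ * X = Λ := by
      rw [Matrix.transpose_mul, Matrix.mul_assoc, hX, Matrix.mul_one, hΛ]
    rw [e1, hXX, zero_add, Matrix.mul_add]
    module
  -- Hessian of g evaluated on normal directions
  have hGd : HasFDerivAt (fun Y : Matrix (Fin n) (Fin p) ℝ => gradf (Y * Amap Y))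
      ((Hf (X * Amap X)).comp (Jd X)) X := by
    exact (hHf (X * Amap X)).comp X (hasFDerivAt_J X)
  have hTd : HasFDerivAt (fun Y : Matrix (Fin n) (Fin p) ℝ => (gradf (Y * Amap Y))ᵀ)
      (transCLM.comp ((Hf (X * Amap X)).comp (Jd X))) X := by
    exact transCLM.hasFDerivAt.comp X hGd
  have h1 := hasFDerivAt_matmul hGd (hasFDerivAt_q X)
  have h2i := hasFDerivAt_matmul hTd (hasFDerivAt_id X)
  have h2 := hasFDerivAt_matmul (hasFDerivAt_id X) h2i
  have hT : HasFDerivAt (fun Z : Matrix (Fin n) (Fin p) ℝ => Zᵀ) transCLM X := by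
    have h0 := transCLM.hasFDerivAt (x := X)
    exact h0
  have h3w := hasFDerivAt_matmul (hasFDerivAt_id X) hT
  have h3 := hasFDerivAt_matmul h3w hGd
  have hbig := ((hGd.const_smul (3/2 : ℝ)).sub (((h1.add h2).add h3).const_smul (1/2 : ℝ)))
  have hkey := hHg.unique (show HasFDerivAt gradg ((3/2 : ℝ) • (Hf (X * Amap X)).comp (Jd X) -
      (1/2 : ℝ) • (((mulCLMr (Xᵀ * X)).comp ((Hf (X * Amap X)).comp (Jd X)) +
          (mulCLM (gradf (X * Amap X))).comp (qd X)) +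
        ((mulCLMr ((gradf (X * Amap X))ᵀ * X)).comp (ContinuousLinearMap.id ℝ (Matrix (Fin n) (Fin p) ℝ)) +
          (mulCLM X).comp ((mulCLMr X).comp (transCLM.comp ((Hf (X * Amap X)).comp (Jd X))) +
            (mulCLM (gradf (X * Amap X))ᵀ).comp (ContinuousLinearMap.id ℝ (Matrix (Fin n) (Fin p) ℝ)))) +
        ((mulCLMr (gradf (X * Amap X))).comp ((mulCLMr Xᵀ).comp (ContinuousLinearMap.id ℝ (Matrix (Fin n) (Fin p) ℝ)) +
            (mulCLM X).comp transCLM) +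
          (mulCLM (X * Xᵀ)).comp ((Hf (X * Amap X)).comp (Jd X))))) X by rw [hggF]; exact hbig)
  rw [hJX] at hkey
  have hJd0 : ∀ Λ : Matrix (Fin p) (Fin p) ℝ, Λᵀ = Λ → Jd X (X * Λ) = 0 := by
    intro Λ hΛ
    rw [Jd_apply]
    have e1 : (X * Λ)ᵀ * X = Λ := by
      rw [Matrix.transpose_mul, Matrix.mul_assoc, hX, Matrix.mul_one, hΛ]
    rw [hX, Matrix.mul_one, e1, hXX, Matrix.mul_add]
    module
  have hHgval : ∀ Λ : Matrix (Fin p) (Fin p) ℝ, Λᵀ = Λ →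
      Hg (X * Λ) = X * ((-(3/2) : ℝ) • (S * Λ + Λ * S)) := by
    intro Λ hΛ
    rw [hkey]
    simp only [ContinuousLinearMap.sub_apply, ContinuousLinearMap.add_apply,
      ContinuousLinearMap.smul_apply, ContinuousLinearMap.comp_apply,
      ContinuousLinearMap.flip_apply, ContinuousLinearMap.coe_id', id_eq,
      mulCLM_apply, mulCLMr_apply, transCLM_apply, qd_apply, hJd0 Λ hΛ, map_zero]
    have e1 : (X * Λ)ᵀ * X = Λ := by
      rw [Matrix.transpose_mul, Matrix.mul_assoc, hX, Matrix.mul_one, hΛ]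
    rw [hGS]
    simp only [hXX, Matrix.transpose_zero, Matrix.zero_mul, Matrix.mul_zero, add_zero,
      zero_add, Matrix.transpose_mul, Matrix.transpose_transpose, hS, hΛ, Matrix.mul_add,
      Matrix.add_mul, Matrix.mul_assoc, hX, Matrix.mul_one, Matrix.one_mul, Matrix.mul_smul,
      smul_zero]
    module
  refine ⟨?_, ?_⟩
  · intro Λ hΛ
    have e1 := hstep Λ hΛ
    have e2 : finner (X * Λ) (Hh (X * Λ))
        = finner (X * Λ) (Hg (X * Λ)) + (2 * β) * ‖X * Λ‖ ^ 2 := by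
      rw [e1, finner, Matrix.mul_add, Matrix.trace_add, Matrix.mul_smul, Matrix.trace_smul,
        smul_eq_mul, norm_sq_eq_finner]
      rfl
    have hcs := abs_finner_le (X * Λ) (Hg (X * Λ))
    have hop := Hg.le_opNorm (X * Λ)
    have hnn : (0:ℝ) ≤ ‖X * Λ‖ := norm_nonneg _
    have hb : ‖Hg (X * Λ)‖ ≤ M₂ * ‖X * Λ‖ :=
      le_trans hop (mul_le_mul_of_nonneg_right hM₂ hnn)
    have h0 : -(M₂ * ‖X * Λ‖ ^ 2) ≤ finner (X * Λ) (Hg (X * Λ)) := by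
      nlinarith [neg_abs_le (finner (X * Λ) (Hg (X * Λ)))]
    rw [e2]
    nlinarith [h0]
  · intro D₁ hD₁ Λ hΛ
    rw [hstep Λ hΛ, hHgval Λ hΛ]
    have e8 : X * ((-(3/2) : ℝ) • (S * Λ + Λ * S)) + (2 * β) • (X * Λ)
        = X * ((-(3/2) : ℝ) • (S * Λ + Λ * S) + (2 * β) • Λ) := by
      simp [Matrix.mul_add, Matrix.mul_smul]
    rw [e8]
    refine finner_X_sym hD₁ ?_
    simp only [Matrix.transpose_add, Matrix.transpose_smul, Matrix.transpose_mul, hS, hΛ]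
    rw [add_comm (Λ * S) (S * Λ)]

end ExPen
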